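/- Assume A ∈ ℝ^{N×d} and y ∈ ℝ^N satisfy the standing assumption (non-unique case), and let σ ∈ {−1,1}^d be a sign vector such that σ⊙x has all entries ≥ 0 for every x ∈ L_min. Then T = { n ∈ ker(A) : ∑_{i∈S} σ_i·n_i = 0 and n_i = 0 for all i ∈ S^c }. -/

import Mathlib

open scoped BigOperators

noncomputable section

/-- The ℓ¹-norm of a vector in ℝ^d. -/
def l1 {d : ℕ} (x : Fin d → ℝ) : ℝ := ∑ i, |x i|

/-- The set of ℓ¹-minimizers among the solutions of A x = y. -/
def Lmin {N d : ℕ} (A : Matrix (Fin N) (Fin d) ℝ) (y : Fin N → ℝ) : Set (Fin d → ℝ) :=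
  { x | A.mulVec x = y ∧ ∀ z, A.mulVec z = y → l1 x ≤ l1 z }

open Classical in
/-- The generalized support S = ∪_{x ∈ L_min} supp(x). -/
def genS {N d : ℕ} (A : Matrix (Fin N) (Fin d) ℝ) (y : Fin N → ℝ) : Finset (Fin d) :=
  Finset.univ.filter (fun i => ∃ x ∈ Lmin A y, x i ≠ 0)

/-- The tangent space T = span{x - x' : x, x' ∈ L_min}. -/
def Tspace {N d : ℕ} (A : Matrix (Fin N) (Fin d) ℝ) (y : Fin N → ℝ) :
    Submodule ℝ (Fin d → ℝ) :=
  Submodule.span ℝ { v | ∃ x ∈ Lmin A y, ∃ x' ∈ Lmin A y, v = x - x' }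

/-- The set of quotients whose supremum is the generalized null space constant ρ(N). -/
def grhoSet {d : ℕ} (S : Finset (Fin d)) (σ : Fin d → ℝ) (Nset : Set (Fin d → ℝ)) :
    Set ℝ :=
  { r | ∃ n ∈ Nset, n ≠ 0 ∧ r = (-∑ i ∈ S, σ i * n i) / ∑ i ∈ Sᶜ, |n i| }

/-- The generalized null space constant ρ(N). -/
def grho {d : ℕ} (S : Finset (Fin d)) (σ : Fin d → ℝ) (Nset : Set (Fin d → ℝ)) : ℝ :=
  sSup (grhoSet S σ Nset)

/-- The set of quotients whose supremum is the generalized null space constant ρ⁻(N). -/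
def grhoMinusSet {d : ℕ} (S : Finset (Fin d)) (σ : Fin d → ℝ) (Nset : Set (Fin d → ℝ)) :
    Set ℝ :=
  { r | ∃ n ∈ Nset, n ≠ 0 ∧
      r = (∑ i ∈ S.filter (fun i => σ i * n i < 0), |n i|) / ∑ i ∈ Sᶜ, |n i| }

/-- The generalized null space constant ρ⁻(N). -/
def grhoMinus {d : ℕ} (S : Finset (Fin d)) (σ : Fin d → ℝ) (Nset : Set (Fin d → ℝ)) : ℝ :=
  sSup (grhoMinusSet S σ Nset)

/-- The set of quotients whose supremum is the generalized null space constant ρ̃(N). -/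
def grhoTildeSet {d : ℕ} (S : Finset (Fin d)) (σ : Fin d → ℝ) (Nset : Set (Fin d → ℝ)) :
    Set ℝ :=
  { r | ∃ n ∈ Nset, n ≠ 0 ∧ r = (∑ i ∈ S, |n i|) / ∑ i ∈ Sᶜ, |n i| }

/-- The generalized null space constant ρ̃(N). -/
def grhoTilde {d : ℕ} (S : Finset (Fin d)) (σ : Fin d → ℝ) (Nset : Set (Fin d → ℝ)) : ℝ :=
  sSup (grhoTildeSet S σ Nset)

section aux
variable {N d : ℕ} (A : Matrix (Fin N) (Fin d) ℝ) (y : Fin N → ℝ)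

lemma l1_continuous : Continuous (l1 : (Fin d → ℝ) → ℝ) := by
  unfold l1; exact continuous_finset_sum _ fun i _ => (continuous_apply i).abs

lemma l1_smul (a : ℝ) (x : Fin d → ℝ) : l1 (a • x) = |a| * l1 x := by
  unfold l1; simp [Finset.mul_sum, abs_mul]

lemma l1_sum_le {ι : Type*} (s : Finset ι) (c : ι → Fin d → ℝ) :
    l1 (∑ i ∈ s, c i) ≤ ∑ i ∈ s, l1 (c i) := by
  unfold l1
  calc ∑ j, |(∑ i ∈ s, c i) j| = ∑ j, |∑ i ∈ s, c i j| := by simp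
  _ ≤ ∑ j, ∑ i ∈ s, |c i j| :=
      Finset.sum_le_sum fun j _ => Finset.abs_sum_le_sum_abs _ _
  _ = ∑ i ∈ s, ∑ j, |c i j| := Finset.sum_comm

lemma mem_genS {i : Fin d} : i ∈ genS A y ↔ ∃ x ∈ Lmin A y, x i ≠ 0 := by
  simp [genS]

lemma zero_off_S {x : Fin d → ℝ} (hx : x ∈ Lmin A y) {i : Fin d} (hi : i ∉ genS A y) :
    x i = 0 := by
  by_contra h
  exact hi ((mem_genS A y).mpr ⟨x, hx, h⟩)

lemma Lmin_nonempty (hex : ∃ x, A.mulVec x = y) : (Lmin A y).Nonempty := by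
  obtain ⟨x₀, hx₀⟩ := hex
  set K : Set (Fin d → ℝ) := {z | A.mulVec z = y ∧ l1 z ≤ l1 x₀} with hK
  have hmvc : Continuous fun z : Fin d → ℝ => A.mulVec z := by
    have := (A.mulVecLin).continuous_of_finiteDimensional
    exact this
  have hKc : IsClosed K :=
    (isClosed_eq hmvc continuous_const).inter
      (isClosed_le (l1_continuous) continuous_const)
  have hKb : IsCompact K := by
    apply Metric.isCompact_of_isClosed_isBounded hKc
    apply Bornology.IsBounded.subset (Metric.isBounded_closedBall (x := (0:Fin d → ℝ)) (r := l1 x₀))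
    intro z hz
    simp only [Metric.mem_closedBall, dist_zero_right]
    refine (pi_norm_le_iff_of_nonneg ?_).mpr ?_
    · exact le_trans (Finset.sum_nonneg fun i _ => abs_nonneg _) hz.2
    · intro i
      refine le_trans ?_ hz.2
      exact Finset.single_le_sum (f := fun j => |z j|) (fun j _ => abs_nonneg _) (Finset.mem_univ i)
  have hKne : K.Nonempty := ⟨x₀, hx₀, le_refl _⟩
  obtain ⟨xs, hxsK, hmin⟩ := hKb.exists_isMinOn hKne (l1_continuous.continuousOn)
  refine ⟨xs, hxsK.1, fun z hz => ?_⟩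
  rcases le_or_gt (l1 z) (l1 x₀) with h | h
  · exact hmin ⟨hz, h⟩
  · exact le_trans (hmin hxsK) (le_of_lt (lt_of_le_of_lt hxsK.2 h))

lemma avg_mem (s : Finset (Fin d)) (hs : s.Nonempty) (c : Fin d → (Fin d → ℝ))
    (hc : ∀ i ∈ s, c i ∈ Lmin A y) :
    ((s.card : ℝ)⁻¹ • ∑ i ∈ s, c i) ∈ Lmin A y := by
  have hcard : (0:ℝ) < s.card := by exact_mod_cast Finset.card_pos.mpr hs
  have hmv : A.mulVec (∑ i ∈ s, c i) = (s.card : ℝ) • y := by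
    have : A.mulVec (∑ i ∈ s, c i) = ∑ i ∈ s, A.mulVec (c i) := by
      have h := map_sum A.mulVecLin c s
      simp only [Matrix.mulVecLin_apply] at h
      exact h
    rw [this, Finset.sum_congr rfl (fun i hi => (hc i hi).1)]
    simp [Finset.sum_const, Nat.cast_smul_eq_nsmul ℝ]
  constructor
  · rw [Matrix.mulVec_smul, hmv, smul_smul, inv_mul_cancel₀ (ne_of_gt hcard), one_smul]
  · intro z hz
    have h1 : l1 ((s.card : ℝ)⁻¹ • ∑ i ∈ s, c i) ≤ (s.card : ℝ)⁻¹ * ∑ i ∈ s, l1 (c i) := by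
      rw [l1_smul, abs_of_pos (inv_pos.mpr hcard)]
      exact mul_le_mul_of_nonneg_left (l1_sum_le _ _) (le_of_lt (inv_pos.mpr hcard))
    refine le_trans h1 ?_
    have h2 : ∑ i ∈ s, l1 (c i) ≤ (s.card : ℝ) * l1 z := by
      calc ∑ i ∈ s, l1 (c i) ≤ ∑ i ∈ s, l1 z :=
        Finset.sum_le_sum fun i hi => (hc i hi).2 z hz
      _ = (s.card : ℝ) * l1 z := by simp [nsmul_eq_mul]
    calc (s.card : ℝ)⁻¹ * ∑ i ∈ s, l1 (c i) ≤ (s.card : ℝ)⁻¹ * ((s.card : ℝ) * l1 z) :=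
      mul_le_mul_of_nonneg_left h2 (le_of_lt (inv_pos.mpr hcard))
    _ = l1 z := by field_simp

lemma sum_sigma_eq_l1 {σ : Fin d → ℝ} (hσ : ∀ i, σ i = 1 ∨ σ i = -1)
    (hσsign : ∀ x ∈ Lmin A y, ∀ i, 0 ≤ σ i * x i)
    {x : Fin d → ℝ} (hx : x ∈ Lmin A y) :
    (∑ i ∈ genS A y, σ i * x i) = l1 x := by
  have h1 : ∀ i, σ i * x i = |x i| := fun i => by
    have h2 := hσsign x hx i
    have h3 : |σ i| = 1 := by rcases hσ i with h | h <;> simp [h]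
    calc σ i * x i = |σ i * x i| := (abs_of_nonneg h2).symm
    _ = |σ i| * |x i| := abs_mul _ _
    _ = |x i| := by rw [h3, one_mul]
  rw [Finset.sum_congr rfl (fun i _ => h1 i)]
  unfold l1
  exact Finset.sum_subset (Finset.subset_univ _)
    (fun i _ hi => by rw [zero_off_S A y hx hi, abs_zero])

end aux

/-- characterization of the tangent space T. -/
theorem Tspace_characterization {N d : ℕ}
    (A : Matrix (Fin N) (Fin d) ℝ) (y : Fin N → ℝ)
    (hex : ∃ x : Fin d → ℝ, A.mulVec x = y)
    (hy : y ≠ 0)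
    (hker : ∃ n : Fin d → ℝ, n ≠ 0 ∧ A.mulVec n = 0)
    (σ : Fin d → ℝ) (hσ : ∀ i, σ i = 1 ∨ σ i = -1)
    (hσsign : ∀ x ∈ Lmin A y, ∀ i, 0 ≤ σ i * x i) :
    ∀ n : Fin d → ℝ, n ∈ Tspace A y ↔
      (A.mulVec n = 0 ∧ (∑ i ∈ genS A y, σ i * n i) = 0 ∧
        ∀ i ∈ (genS A y)ᶜ, n i = 0) := by
  have habs : ∀ i, |σ i| = 1 := fun i => by rcases hσ i with h | h <;> simp [h]
  intro n
  constructor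
  · intro hn
    induction hn using Submodule.span_induction with
    | mem v hv =>
        obtain ⟨x, hx, x', hx', rfl⟩ := hv
        refine ⟨?_, ?_, ?_⟩
        · rw [Matrix.mulVec_sub, hx.1, hx'.1, sub_self]
        · have e1 := sum_sigma_eq_l1 A y hσ hσsign hx
          have e2 := sum_sigma_eq_l1 A y hσ hσsign hx'
          have e3 : l1 x = l1 x' := le_antisymm (hx.2 x' hx'.1) (hx'.2 x hx.1)
          simp only [Pi.sub_apply, mul_sub, Finset.sum_sub_distrib, e1, e2, e3, sub_self]
        · intro i hi
          rw [Finset.mem_compl] at hi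
          simp [zero_off_S A y hx hi, zero_off_S A y hx' hi]
    | zero => exact ⟨Matrix.mulVec_zero A, by simp, by simp⟩
    | add v w _ _ hv hw =>
        refine ⟨?_, ?_, ?_⟩
        · rw [Matrix.mulVec_add, hv.1, hw.1, add_zero]
        · simp only [Pi.add_apply, mul_add, Finset.sum_add_distrib, hv.2.1, hw.2.1, add_zero]
        · intro i hi; simp [hv.2.2 i hi, hw.2.2 i hi]
    | smul a v _ hv =>
        refine ⟨?_, ?_, ?_⟩
        · rw [Matrix.mulVec_smul, hv.1, smul_zero]
        · calc ∑ i ∈ genS A y, σ i * (a • v) i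
              = ∑ i ∈ genS A y, a * (σ i * v i) :=
                Finset.sum_congr rfl (fun i _ => by simp [smul_eq_mul]; ring)
          _ = a * ∑ i ∈ genS A y, σ i * v i := (Finset.mul_sum _ _ _).symm
          _ = 0 := by rw [hv.2.1, mul_zero]
        · intro i hi; simp [hv.2.2 i hi]
  · rintro ⟨hker0, hsum, hoff⟩
    by_cases hn0 : n = 0
    · rw [hn0]; exact (Tspace A y).zero_mem
    obtain ⟨j, hj⟩ := Function.ne_iff.mp hn0
    have hjS : j ∈ genS A y := by
      by_contra h
      exact hj (hoff j (Finset.mem_compl.mpr h))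
    have hS : (genS A y).Nonempty := ⟨j, hjS⟩
    obtain ⟨x₁, hx₁⟩ := Lmin_nonempty A y hex
    have hch : ∀ i : Fin d, ∃ x, x ∈ Lmin A y ∧ (i ∈ genS A y → x i ≠ 0) := by
      intro i
      by_cases hi : i ∈ genS A y
      · obtain ⟨x, hx, hxi⟩ := (mem_genS A y).mp hi
        exact ⟨x, hx, fun _ => hxi⟩
      · exact ⟨x₁, hx₁, fun h => absurd h hi⟩
    choose c hc hc0 using hch
    set S := genS A y with hSdef
    set k : ℝ := (S.card : ℝ) with hk
    have hkpos : (0:ℝ) < k := by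
      rw [hk]; exact_mod_cast Finset.card_pos.mpr hS
    set xb : Fin d → ℝ := (k)⁻¹ • ∑ i ∈ S, c i with hxb
    have hxbL : xb ∈ Lmin A y := avg_mem A y S hS c (fun i _ => hc i)
    have hpos : ∀ i ∈ S, 0 < σ i * xb i := by
      intro i hi
      have hσne : σ i ≠ 0 := by
        intro h; have := habs i; rw [h] at this; simp at this
      have hsumpos : 0 < ∑ j ∈ S, σ i * c j i :=
        Finset.sum_pos' (fun j _ => hσsign (c j) (hc j) i)
          ⟨i, hi, lt_of_le_of_ne (hσsign (c i) (hc i) i)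
            (Ne.symm (mul_ne_zero hσne (hc0 i hi)))⟩
      have e : xb i = k⁻¹ * ∑ j ∈ S, c j i := by simp [hxb, Finset.sum_apply]
      have e2 : σ i * xb i = k⁻¹ * (σ i * ∑ j ∈ S, c j i) := by rw [e]; ring
      rw [e2, Finset.mul_sum]
      exact mul_pos (inv_pos.mpr hkpos) hsumpos
    set ε : ℝ := S.inf' hS (fun i => (σ i * xb i) / (|n i| + 1)) with hε
    have hεpos : 0 < ε := by
      rw [hε, Finset.lt_inf'_iff]
      intro i hi
      exact div_pos (hpos i hi) (by positivity)
    have hεle : ∀ i ∈ S, ε ≤ (σ i * xb i) / (|n i| + 1) := fun i hi => Finset.inf'_le _ hi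
    set z : Fin d → ℝ := xb + ε • n with hz
    have hzi : ∀ i, z i = xb i + ε * n i := fun i => by simp [hz]
    have hzfeas : A.mulVec z = y := by
      have hAxb : A.mulVec xb = y := hxbL.1
      rw [hz, Matrix.mulVec_add, hAxb, Matrix.mulVec_smul, hker0, smul_zero, add_zero]
    have hzpos : ∀ i ∈ S, 0 < σ i * z i := by
      intro i hi
      have h1 := hpos i hi
      have h3 : ε * (|n i| + 1) ≤ σ i * xb i := (le_div_iff₀ (by positivity)).mp (hεle i hi)
      have h4 : -|n i| ≤ σ i * n i := by
        have h5 : |σ i * n i| = |n i| := by rw [abs_mul, habs i, one_mul]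
        have := neg_abs_le (σ i * n i)
        linarith [this, h5.le, h5.ge]
      have e : σ i * z i = σ i * xb i + ε * (σ i * n i) := by rw [hzi i]; ring
      rw [e]
      nlinarith [mul_le_mul_of_nonneg_left h4 hεpos.le, abs_nonneg (n i)]
    have hzero : ∀ i, i ∉ S → z i = 0 := by
      intro i hi
      have h5 := zero_off_S A y hxbL hi
      have h6 := hoff i (Finset.mem_compl.mpr hi)
      rw [hzi i, h5, h6, mul_zero, add_zero]
    have hzL : z ∈ Lmin A y := by
      refine ⟨hzfeas, fun w hw => ?_⟩
      have e1 : l1 z = ∑ i ∈ S, σ i * z i := by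
        unfold l1
        rw [← Finset.sum_subset (Finset.subset_univ S)
          (fun i _ hi => by rw [hzero i hi, abs_zero])]
        exact Finset.sum_congr rfl fun i hi => by
          rw [← abs_of_pos (hzpos i hi), abs_mul, habs i, one_mul]
      have e2 : ∑ i ∈ S, σ i * z i = l1 xb := by
        have e3 : ∀ i, σ i * z i = σ i * xb i + ε * (σ i * n i) := fun i => by
          rw [hzi i]; ring
        rw [Finset.sum_congr rfl fun i _ => e3 i, Finset.sum_add_distrib, ← Finset.mul_sum,
          hsum, mul_zero, add_zero]
        exact sum_sigma_eq_l1 A y hσ hσsign hxbL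
      rw [e1, e2]
      exact hxbL.2 w hw
    have hsp : z - xb ∈ Tspace A y :=
      Submodule.subset_span ⟨z, hzL, xb, hxbL, rfl⟩
    have hsub : z - xb = ε • n := by rw [hz]; abel
    rw [hsub] at hsp
    have hfin := (Tspace A y).smul_mem ε⁻¹ hsp
    rwa [smul_smul, inv_mul_cancel₀ (ne_of_gt hεpos), one_smul] at hfin
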